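/- arXiv:1410.7605 — 2 statements merged into one kernel-verified Lean document; each statement's English description precedes it below -/
import Mathlib

section
/- Let A be a symmetric trilinear form on ℝ^p and B a positive-semidefinite symmetric bilinear form on ℝ^p. If |A[u,u,u]| ≤ B[u,u]^{3/2} for all u ∈ ℝ^p, then |A[u,v,w]| ≤ B[u,u]^{1/2} B[v,v]^{1/2} B[w,w]^{1/2} for all u, v, w ∈ ℝ^p. -/
lemma psd_cs {V : Type*} [AddCommGroup V] [Module ℝ V]
    (S : V → V → ℝ)
    (hadd : ∀ x y z, S (x + y) z = S x z + S y z)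
    (hsmul : ∀ (t : ℝ) (x y : V), S (t • x) y = t * S x y)
    (hsym : ∀ x y, S x y = S y x)
    (hpsd : ∀ x, 0 ≤ S x x) {u : V} (hu : S u u = 0) (x : V) : S u x = 0 := by
  by_contra h
  have key : ∀ t : ℝ, 0 ≤ S x x + 2 * t * S u x := by
    intro t
    have h0 := hpsd (x + t • u)
    have hexp : S (x + t • u) (x + t • u) = S x x + 2 * t * S u x := by
      rw [hadd, hsmul]
      rw [hsym x (x + t • u), hsym u (x + t • u)]
      rw [hadd, hadd, hsmul, hsmul]
      rw [hsym x u, hu]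
      ring
    rw [hexp] at h0; exact h0
  have := key (-(S x x + 1) / (2 * S u x))
  have h2 : S x x + 2 * (-(S x x + 1) / (2 * S u x)) * S u x = -1 := by
    field_simp
    ring
  rw [h2] at this; linarith

lemma cube_root_circle (c s : ℝ) (h : c ^ 2 + s ^ 2 = 1) :
    ∃ C S : ℝ, C ^ 2 + S ^ 2 = 1 ∧ C ^ 3 - 3 * C * S ^ 2 = c ∧ 3 * C ^ 2 * S - S ^ 3 = s := by
  set z : ℂ := ⟨c, s⟩ with hzdef
  have habsz : ‖z‖ = 1 := by
    rw [Complex.norm_def, Complex.normSq_mk]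
    rw [show c * c + s * s = 1 by nlinarith]
    exact Real.sqrt_one
  have hz : z ≠ 0 := by
    intro h0
    rw [h0] at habsz; simp at habsz
  set w := Complex.exp (Complex.log z / 3) with hwdef
  have hw3 : w ^ 3 = z := by
    rw [hwdef, ← Complex.exp_nat_mul]
    rw [show (3 : ℕ) * (Complex.log z / 3) = Complex.log z by ring]
    exact Complex.exp_log hz
  have habs : ‖w‖ = 1 := by
    rw [hwdef, Complex.norm_exp]
    have : (Complex.log z / 3).re = Real.log ‖z‖ / 3 := by
      rw [Complex.div_re]
      simp [Complex.log_re]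
      ring
    rw [this, habsz, Real.log_one]
    norm_num [Real.exp_zero]
  have hnorm : w.re ^ 2 + w.im ^ 2 = 1 := by
    have := Complex.sq_norm w
    rw [habs] at this
    rw [Complex.normSq_apply] at this
    nlinarith
  refine ⟨w.re, w.im, hnorm, ?_, ?_⟩
  · have : (w ^ 3).re = c := by rw [hw3]
    rw [pow_succ, pow_succ, pow_one] at this
    simp [Complex.mul_re, Complex.mul_im] at this
    nlinarith [this]
  · have : (w ^ 3).im = s := by rw [hw3]
    rw [pow_succ, pow_succ, pow_one] at this
    simp [Complex.mul_re, Complex.mul_im] at this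
    nlinarith [this]

lemma cont_bb {p : ℕ}
    (β : EuclideanSpace ℝ (Fin p) →ₗ[ℝ] EuclideanSpace ℝ (Fin p) →ₗ[ℝ] ℝ) :
    Continuous fun t : EuclideanSpace ℝ (Fin p) => β t t := by
  set E := EuclideanSpace ℝ (Fin p)
  let β4 : E →ₗ[ℝ] (E →L[ℝ] ℝ) := LinearMap.toContinuousLinearMap.toLinearMap.comp β
  let β5 : E →L[ℝ] (E →L[ℝ] ℝ) := LinearMap.toContinuousLinearMap β4
  have he : ∀ a b : E, β5 a b = β a b := by intro a b; simp [β5, β4]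
  have : (fun t : E => β t t) = fun t : E => β5 t t := by funext t; rw [he]
  rw [this]; fun_prop

lemma cont_aa {p : ℕ}
    (A : EuclideanSpace ℝ (Fin p) →ₗ[ℝ] EuclideanSpace ℝ (Fin p) →ₗ[ℝ]
          EuclideanSpace ℝ (Fin p) →ₗ[ℝ] ℝ) :
    Continuous fun q : EuclideanSpace ℝ (Fin p) × EuclideanSpace ℝ (Fin p) => A q.1 q.1 q.2 := by
  set E := EuclideanSpace ℝ (Fin p)
  let A2 : E →ₗ[ℝ] E →ₗ[ℝ] (E →L[ℝ] ℝ) := A.compr₂ LinearMap.toContinuousLinearMap.toLinearMap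
  let A4 : E →ₗ[ℝ] (E →L[ℝ] (E →L[ℝ] ℝ)) := LinearMap.toContinuousLinearMap.toLinearMap.comp A2
  let A5 : E →L[ℝ] (E →L[ℝ] (E →L[ℝ] ℝ)) := { toLinearMap := A4, cont := LinearMap.continuous_of_finiteDimensional (𝕜 := ℝ) (E := E) (F' := E →L[ℝ] E →L[ℝ] ℝ) (A4 : _) }
  have he : ∀ a b c : E, A5 a b c = A a b c := by
    intro a b c; simp [A5, A4, A2, LinearMap.compr₂]
  have : (fun q : E × E => A q.1 q.1 q.2) = fun q : E × E => A5 q.1 q.1 q.2 := by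
    funext q; rw [he]
  rw [this]; fun_prop

set_option maxHeartbeats 4000000 in
lemma key_lemma {p : ℕ}
    (A : EuclideanSpace ℝ (Fin p) →ₗ[ℝ] EuclideanSpace ℝ (Fin p) →ₗ[ℝ]
          EuclideanSpace ℝ (Fin p) →ₗ[ℝ] ℝ)
    (β : EuclideanSpace ℝ (Fin p) →ₗ[ℝ] EuclideanSpace ℝ (Fin p) →ₗ[ℝ] ℝ)
    (hA1 : ∀ u v w, A u v w = A v u w)
    (hA2 : ∀ u v w, A u v w = A u w v)
    (hβs : ∀ u v, β u v = β v u)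
    (ε : ℝ) (hε : 0 < ε)
    (hco : ∀ x, ε * ‖x‖ ^ 2 ≤ β x x)
    (hA : ∀ x, |A x x x| ≤ Real.sqrt (β x x) ^ 3) :
    ∀ u v w, |A u v w| ≤ Real.sqrt (β u u) * Real.sqrt (β v v) * Real.sqrt (β w w) := by
  set E := EuclideanSpace ℝ (Fin p) with hE
  -- basic facts
  have hβ0 : ∀ x : E, 0 ≤ β x x := fun x => le_trans (by positivity) (hco x)
  have hxz : ∀ x : E, β x x = 0 → x = 0 := by
    intro x hx
    have := hco x
    rw [hx] at this
    have : ‖x‖ ^ 2 ≤ 0 := by nlinarith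
    have : ‖x‖ = 0 := by nlinarith [norm_nonneg x]
    exact norm_eq_zero.mp this
  -- the central pair bound
  suffices hpair : ∀ x z : E, |A x x z| ≤ β x x * Real.sqrt (β z z) by
    intro u v w
    by_cases hu : β u u = 0
    · rw [hxz u hu]
      simp only [map_zero, LinearMap.zero_apply, abs_zero]
      positivity
    by_cases hv : β v v = 0
    · rw [hxz v hv]
      rw [hA1]
      simp only [map_zero, LinearMap.zero_apply, abs_zero]
      positivity
    have hνu : 0 < Real.sqrt (β u u) := Real.sqrt_pos.mpr (lt_of_le_of_ne (hβ0 u) (Ne.symm hu))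
    have hνv : 0 < Real.sqrt (β v v) := Real.sqrt_pos.mpr (lt_of_le_of_ne (hβ0 v) (Ne.symm hv))
    set x := (Real.sqrt (β u u))⁻¹ • u with hxdef
    set y := (Real.sqrt (β v v))⁻¹ • v with hydef
    have hsq : ∀ t : E, 0 ≤ β t t → β ((Real.sqrt (β t t))⁻¹ • t) ((Real.sqrt (β t t))⁻¹ • t) = (Real.sqrt (β t t))⁻¹ ^ 2 * β t t := by
      intro t _
      simp only [map_smul, LinearMap.smul_apply, smul_eq_mul]
      ring
    have hxx : β x x = 1 := by
      rw [hxdef, hsq u (hβ0 u)]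
      rw [← Real.sq_sqrt (hβ0 u)]
      field_simp
      rw [Real.sqrt_sq (Real.sqrt_nonneg _)]
    have hyy : β y y = 1 := by
      rw [hydef, hsq v (hβ0 v)]
      rw [← Real.sq_sqrt (hβ0 v)]
      field_simp
      rw [Real.sqrt_sq (Real.sqrt_nonneg _)]
    -- polarization step
    have hkey4 : |A x y w| ≤ Real.sqrt (β w w) := by
      have e1 : A (x + y) (x + y) w - A (x - y) (x - y) w = 4 * A x y w := by
        have hyx : A y x w = A x y w := (hA1 x y w).symm
        simp only [map_add, map_sub, LinearMap.add_apply, LinearMap.sub_apply]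
        rw [hyx]; ring
      have e2 : β (x + y) (x + y) + β (x - y) (x - y) = 4 := by
        simp only [map_add, map_sub, LinearMap.add_apply, LinearMap.sub_apply]
        linarith [hxx, hyy]
      have b1 := hpair (x + y) w
      have b2 := hpair (x - y) w
      have hw0 : 0 ≤ Real.sqrt (β w w) := Real.sqrt_nonneg _
      have habs1 : 4 * |A x y w| ≤ β (x + y) (x + y) * Real.sqrt (β w w) + β (x - y) (x - y) * Real.sqrt (β w w) := by
        have h4 : 4 * |A x y w| = |A (x + y) (x + y) w - A (x - y) (x - y) w| := by
          rw [e1, abs_mul]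
          norm_num
        have h5 : |A (x + y) (x + y) w - A (x - y) (x - y) w| ≤ |A (x + y) (x + y) w| + |A (x - y) (x - y) w| := abs_sub _ _
        have h6 := add_le_add b1 b2
        linarith
      have e3 : β (x + y) (x + y) * Real.sqrt (β w w) + β (x - y) (x - y) * Real.sqrt (β w w) = 4 * Real.sqrt (β w w) := by
        rw [← add_mul, e2]
      linarith
    -- rescale
    have hexp : A u v w = Real.sqrt (β u u) * Real.sqrt (β v v) * A x y w := by
      have hu' : u = Real.sqrt (β u u) • x := (smul_inv_smul₀ (ne_of_gt hνu) u).symm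
      have hv' : v = Real.sqrt (β v v) • y := (smul_inv_smul₀ (ne_of_gt hνv) v).symm
      conv_lhs => rw [hu', hv']
      simp only [map_smul, LinearMap.smul_apply, smul_eq_mul]
      ring
    rw [hexp, abs_mul, abs_mul, abs_of_pos hνu, abs_of_pos hνv, mul_assoc]
    rw [mul_assoc]
    apply mul_le_mul_of_nonneg_left _ (le_of_lt hνu)
    exact mul_le_mul_of_nonneg_left hkey4 (le_of_lt hνv)
  -- now prove hpair
  intro x z
  rcases Nat.eq_zero_or_pos p with hp | hp
  · -- trivial case: everything is zero
    have hx0 : x = 0 := by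
      apply hxz
      have h1 : x = 0 := by
        subst hp
        exact PiLp.ext fun i => i.elim0
      rw [h1]; simp
    rw [hx0]
    simp only [map_zero, LinearMap.zero_apply, abs_zero]
    positivity
  -- continuity of the relevant maps
  have hconβ : Continuous fun t : E => β t t := cont_bb β
  have hconF : Continuous fun q : E × E => A q.1 q.1 q.2 := cont_aa A
  -- the sphere
  set Sph : Set E := {t : E | β t t = 1} with hSph
  have hclosed : IsClosed Sph := isClosed_eq hconβ continuous_const
  have hbdd : Bornology.IsBounded Sph := by
    apply Bornology.IsBounded.subset (Metric.isBounded_closedBall (x := (0:E)) (r := Real.sqrt (1/ε)))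
    intro t ht
    rw [Metric.mem_closedBall, dist_zero_right]
    have h2 : β t t = 1 := ht
    have h1 : ε * ‖t‖ ^ 2 ≤ 1 := by rw [← h2]; exact hco t
    have h3 : ‖t‖ ^ 2 ≤ 1/ε := by
      rw [le_div_iff₀ hε]; linarith
    calc ‖t‖ = Real.sqrt (‖t‖ ^ 2) := (Real.sqrt_sq (norm_nonneg t)).symm
      _ ≤ Real.sqrt (1/ε) := Real.sqrt_le_sqrt h3
  have hcpt : IsCompact Sph := Metric.isCompact_of_isClosed_isBounded hclosed hbdd
  -- nonempty
  have hSne : Sph.Nonempty := by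
    set y : E := EuclideanSpace.single ⟨0, hp⟩ (1:ℝ) with hydef
    have hny : ‖y‖ = 1 := by rw [hydef, EuclideanSpace.norm_single]; norm_num
    have hyy : 0 < β y y := lt_of_lt_of_le (by rw [hny]; nlinarith) (hco y)
    refine ⟨(Real.sqrt (β y y))⁻¹ • y, ?_⟩
    have hsy : 0 < Real.sqrt (β y y) := Real.sqrt_pos.mpr hyy
    show β _ _ = 1
    simp only [map_smul, LinearMap.smul_apply, smul_eq_mul]
    rw [show (Real.sqrt (β y y))⁻¹ * ((Real.sqrt (β y y))⁻¹ * β y y) = (Real.sqrt (β y y))⁻¹ ^ 2 * β y y by ring]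
    rw [← Real.sq_sqrt (le_of_lt hyy)]
    field_simp
    rw [Real.sqrt_sq (Real.sqrt_nonneg _)]
  -- maximizer
  obtain ⟨q₀, hq₀K, hq₀max⟩ := (hcpt.prod hcpt).exists_isMaxOn (hSne.prod hSne)
    (cont_aa A).continuousOn
  set u : E := q₀.1 with hudef
  set w : E := q₀.2 with hwdef
  set α : ℝ := A u u w with hαdef
  have hu1 : β u u = 1 := hq₀K.1
  have hw1 : β w w = 1 := hq₀K.2
  have hαmax : ∀ a b : E, β a a = 1 → β b b = 1 → A a a b ≤ α := by
    intro a b ha hb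
    exact hq₀max (Set.mk_mem_prod ha hb)
  have hα0 : 0 ≤ α := by
    have h1 : β (-w) (-w) = 1 := by
      simpa using hw1
    have h2 := hαmax u (-w) hu1 h1
    have h3 : A u u (-w) = -α := map_neg (A u u) w
    rw [h3] at h2; linarith
  -- the homogeneous upper bound
  have hub : ∀ a b : E, A a a b ≤ α * (β a a * Real.sqrt (β b b)) := by
    intro a b
    by_cases ha : β a a = 0
    · rw [hxz a ha]
      simp only [map_zero, LinearMap.zero_apply, ha]
      ring_nf
      rfl
    by_cases hb : β b b = 0
    · rw [hxz b hb]
      simp only [map_zero, hb, Real.sqrt_zero, mul_zero]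
      rfl
    have hνa : 0 < Real.sqrt (β a a) := Real.sqrt_pos.mpr (lt_of_le_of_ne (hβ0 a) (Ne.symm ha))
    have hνb : 0 < Real.sqrt (β b b) := Real.sqrt_pos.mpr (lt_of_le_of_ne (hβ0 b) (Ne.symm hb))
    set a' : E := (Real.sqrt (β a a))⁻¹ • a with hadef
    set b' : E := (Real.sqrt (β b b))⁻¹ • b with hbdef
    have ha1 : β a' a' = 1 := by
      rw [hadef]
      simp only [map_smul, LinearMap.smul_apply, smul_eq_mul]
      rw [show (Real.sqrt (β a a))⁻¹ * ((Real.sqrt (β a a))⁻¹ * β a a) = (Real.sqrt (β a a))⁻¹ ^ 2 * β a a by ring]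
      rw [← Real.sq_sqrt (hβ0 a)]
      field_simp
      rw [Real.sqrt_sq (Real.sqrt_nonneg _)]
    have hb1 : β b' b' = 1 := by
      rw [hbdef]
      simp only [map_smul, LinearMap.smul_apply, smul_eq_mul]
      rw [show (Real.sqrt (β b b))⁻¹ * ((Real.sqrt (β b b))⁻¹ * β b b) = (Real.sqrt (β b b))⁻¹ ^ 2 * β b b by ring]
      rw [← Real.sq_sqrt (hβ0 b)]
      field_simp
      rw [Real.sqrt_sq (Real.sqrt_nonneg _)]
    have hmax := hαmax a' b' ha1 hb1
    have hexp : A a a b = Real.sqrt (β a a) ^ 2 * Real.sqrt (β b b) * A a' a' b' := by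
      have ha' : a = Real.sqrt (β a a) • a' := (smul_inv_smul₀ (ne_of_gt hνa) a).symm
      have hb' : b = Real.sqrt (β b b) • b' := (smul_inv_smul₀ (ne_of_gt hνb) b).symm
      conv_lhs => rw [ha', hb']
      simp only [map_smul, LinearMap.smul_apply, smul_eq_mul]
      ring
    rw [hexp, Real.sq_sqrt (hβ0 a)]
    have hf : 0 ≤ β a a * Real.sqrt (β b b) := mul_nonneg (hβ0 a) (Real.sqrt_nonneg _)
    calc β a a * Real.sqrt (β b b) * A a' a' b' ≤ β a a * Real.sqrt (β b b) * α :=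
          mul_le_mul_of_nonneg_left hmax hf
      _ = α * (β a a * Real.sqrt (β b b)) := by ring
  have habs : ∀ a b : E, |A a a b| ≤ α * (β a a * Real.sqrt (β b b)) := by
    intro a b
    rw [abs_le]
    constructor
    · have h1 : β (-b) (-b) = β b b := by
        simp only [map_neg, LinearMap.neg_apply, neg_neg]
      have h2 := hub a (-b)
      have h3 : A a a (-b) = -(A a a b) := by rw [map_neg]
      rw [h3, h1] at h2; linarith
    · exact hub a b
  -- reduce to α ≤ 1
  suffices hα1 : α ≤ 1 by
    have h := habs x z
    have h2 : α * (β x x * Real.sqrt (β z z)) ≤ 1 * (β x x * Real.sqrt (β z z)) :=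
      mul_le_mul_of_nonneg_right hα1 (mul_nonneg (hβ0 x) (Real.sqrt_nonneg _))
    rw [one_mul] at h2
    linarith
  rcases le_or_gt α 0 with hαneg | hαpos
  · linarith
  -- first-order condition in the first two slots
  have R2 : ∀ t : E, A u t w = α * β u t := by
    intro t
    have h0 := psd_cs (fun a b => α * β a b - A a b w)
      (by intro a b cc; simp only [map_add, LinearMap.add_apply]; ring)
      (by intro tt a b; simp only [map_smul, LinearMap.smul_apply, smul_eq_mul]; ring)
      (by intro a b; rw [hβs a b, hA1 a b w])
      (by intro a
          have h2 := hub a w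
          rw [hw1, Real.sqrt_one, mul_one] at h2
          simp only [sub_nonneg]
          linarith)
      (show α * β u u - A u u w = 0 by rw [hu1, mul_one, hαdef, sub_self])
      t
    have h0' : α * β u t - A u t w = 0 := h0
    linarith
  -- first-order condition in the third slot
  have R1 : ∀ t : E, A u u t = α * β w t := by
    intro t
    have h0 := psd_cs (fun a b => α ^ 2 * β a b - A u u a * A u u b)
      (by intro a b cc; simp only [map_add, LinearMap.add_apply]; ring)
      (by intro tt a b; simp only [map_smul, LinearMap.smul_apply, smul_eq_mul]; ring)
      (by intro a b; rw [hβs a b]; ring)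
      (by intro a
          have h2 := habs u a
          rw [hu1, one_mul] at h2
          have h3 : (A u u a) ^ 2 ≤ (α * Real.sqrt (β a a)) ^ 2 := by
            nlinarith [sq_abs (A u u a), abs_nonneg (A u u a)]
          have h4 : (α * Real.sqrt (β a a)) ^ 2 = α ^ 2 * β a a := by
            rw [mul_pow, Real.sq_sqrt (hβ0 a)]
          nlinarith [h3, h4])
      (show α ^ 2 * β w w - A u u w * A u u w = 0 by rw [hw1, mul_one, ← hαdef]; ring)
      t
    have h0' : α ^ 2 * β w t - A u u w * A u u t = 0 := h0
    rw [← hαdef] at h0'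
    have h1 : α * (α * β w t) = α * A u u t := by linarith
    exact (mul_left_cancel₀ (ne_of_gt hαpos) h1).symm
  -- decompose w over u
  set c : ℝ := β u w with hcdef
  set n : E := w - c • u with hndef
  by_cases hn : n = 0
  · -- degenerate case : w is proportional to u
    have hwc : w = c • u := by
      have := hn
      rw [hndef, sub_eq_zero] at this
      exact this
    have hc2 : c ^ 2 = 1 := by
      have h1 := hw1
      rw [hwc] at h1
      simp only [map_smul, LinearMap.smul_apply, smul_eq_mul] at h1
      rw [hu1] at h1
      nlinarith [h1]
    have hαc : α = c * A u u u := by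
      have h1 : A u u (c • u) = c * A u u u := by
        rw [map_smul]; simp [smul_eq_mul]
      rw [hαdef, hwc, h1]
    have hAu : |A u u u| ≤ 1 := by
      have h1 := hA u
      rw [hu1, Real.sqrt_one, one_pow] at h1
      exact h1
    have hc1 : c = 1 ∨ c = -1 := mul_self_eq_one_iff.mp (by nlinarith [hc2])
    rcases hc1 with h | h
    · rw [h, one_mul] at hαc
      rw [hαc]
      linarith [le_abs_self (A u u u), hAu]
    · rw [h] at hαc
      rw [hαc]
      linarith [neg_abs_le (A u u u), hAu]
  · -- main case
    have hβnn : 0 < β n n := by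
      rcases eq_or_lt_of_le (hβ0 n) with h | h
      · exact absurd (hxz n h.symm) hn
      · exact h
    have hβun : β u n = 0 := by
      rw [hndef]
      simp only [map_sub, map_smul, LinearMap.sub_apply, LinearMap.smul_apply, smul_eq_mul]
      rw [hu1, mul_one, ← hcdef, sub_self]
    set sb : ℝ := Real.sqrt (β n n) with hsbdef
    have hsb : 0 < sb := Real.sqrt_pos.mpr hβnn
    have hsb2 : sb ^ 2 = 1 - c ^ 2 := by
      rw [hsbdef, Real.sq_sqrt (hβ0 n)]
      rw [hndef]
      simp only [map_sub, map_smul, LinearMap.sub_apply, LinearMap.smul_apply, smul_eq_mul]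
      rw [hu1, hw1, hβs w u, ← hcdef]
      ring
    set nh : E := sb⁻¹ • n with hnhdef
    have hβunh : β u nh = 0 := by
      rw [hnhdef, map_smul, smul_eq_mul, hβun, mul_zero]
    have hβnhnh : β nh nh = 1 := by
      rw [hnhdef]
      simp only [map_smul, LinearMap.smul_apply, smul_eq_mul]
      rw [show sb⁻¹ * (sb⁻¹ * β n n) = (sb⁻¹) ^ 2 * β n n by ring]
      rw [← (show sb ^ 2 = β n n from Real.sq_sqrt (hβ0 n))]
      field_simp
    have hwdecomp : w = c • u + sb • nh := by
      rw [hnhdef, smul_inv_smul₀ (ne_of_gt hsb), hndef]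
      abel
    have ha' : A u u u = α * c := by
      rw [R1 u, hβs w u, ← hcdef]
    have hβwnh : β w nh = sb := by
      conv_lhs => rw [hwdecomp]
      simp only [map_add, map_smul, LinearMap.add_apply, LinearMap.smul_apply, smul_eq_mul]
      rw [hβunh, hβnhnh]
      ring
    have hb' : A u u nh = α * sb := by rw [R1 nh, hβwnh]
    have he' : A u nh nh = -(α * c) := by
      have h1 : A u nh w = 0 := by rw [R2 nh, hβunh, mul_zero]
      rw [hwdecomp] at h1
      simp only [map_add, map_smul, smul_eq_mul] at h1
      have p1 : A u nh u = A u u nh := hA2 u nh u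
      rw [p1, hb'] at h1
      have h3 : sb * (A u nh nh + α * c) = 0 := by linear_combination h1
      rcases mul_eq_zero.mp h3 with h | h
      · exact absurd h (ne_of_gt hsb)
      · linarith
    have hc2lt : c ^ 2 < 1 := by nlinarith [hsb2, hsb]
    set C : ℝ := Real.sqrt ((1 + c) / 2) with hCdef
    set S : ℝ := Real.sqrt ((1 - c) / 2) with hSdef
    have hC2 : C ^ 2 = (1 + c) / 2 := Real.sq_sqrt (by nlinarith)
    have hS2 : S ^ 2 = (1 - c) / 2 := Real.sq_sqrt (by nlinarith)
    have hCS : 2 * C * S = sb := by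
      have h1 : (2 * C * S) ^ 2 = sb ^ 2 := by
        have e : (2 * C * S) ^ 2 = 4 * C ^ 2 * S ^ 2 := by ring
        rw [e, hC2, hS2, hsb2]; ring
      have h2 : 0 ≤ 2 * C * S := by positivity
      have h3 : (2 * C * S - sb) * (2 * C * S + sb) = 0 := by linear_combination h1
      rcases mul_eq_zero.mp h3 with h | h
      · linarith
      · linarith
    have hcomb : ∀ a b : ℝ, β (a • u + b • nh) (a • u + b • nh) = a ^ 2 + b ^ 2 := by
      intro a b
      simp only [map_add, map_smul, LinearMap.add_apply, LinearMap.smul_apply, smul_eq_mul]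
      rw [hβs nh u, hβunh, hu1, hβnhnh]
      ring
    set x1 : E := C • u + S • nh with hx1def
    have hx1 : β x1 x1 = 1 := by
      rw [hx1def, hcomb]
      linarith [hC2, hS2]
    have hAx1u : A x1 x1 u = α := by
      rw [hx1def]
      simp only [map_add, map_smul, LinearMap.add_apply, LinearMap.smul_apply, smul_eq_mul]
      have p1 : A u nh u = A u u nh := hA2 u nh u
      have p2 : A nh u u = A u u nh := (hA1 nh u u).trans (hA2 u nh u)
      have p3 : A nh nh u = A u nh nh := (hA2 nh nh u).trans (hA1 nh u nh)
      rw [p1, p2, p3, ha', hb', he']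
      linear_combination (α * c) * hC2 - (α * c) * hS2 + (α * sb) * hCS + α * hsb2
    have hR0 : A x1 x1 nh = 0 := by
      set R : ℝ := A x1 x1 nh with hRdef
      set z1 : E := α • u + R • nh with hz1def
      have hβz1 : β z1 z1 = α ^ 2 + R ^ 2 := by rw [hz1def, hcomb]
      have hAx1z1 : A x1 x1 z1 = α ^ 2 + R ^ 2 := by
        rw [hz1def]
        simp only [map_add, map_smul, smul_eq_mul]
        rw [hAx1u, ← hRdef]
        ring
      have hb1 := hub x1 z1
      rw [hx1, hβz1, hAx1z1, one_mul] at hb1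
      set T : ℝ := Real.sqrt (α ^ 2 + R ^ 2) with hTdef
      have hT2 : T ^ 2 = α ^ 2 + R ^ 2 := Real.sq_sqrt (by positivity)
      have hT0 : 0 ≤ T := Real.sqrt_nonneg _
      have hTle : T ≤ α := by
        rcases eq_or_lt_of_le hT0 with h | h
        · linarith
        · nlinarith [hb1, hT2]
      have h5 : α ^ 2 + R ^ 2 ≤ α ^ 2 := by nlinarith [hT2, hTle, hT0, hα0]
      have h6 : R ^ 2 = 0 := le_antisymm (by linarith) (sq_nonneg R)
      exact sq_eq_zero_iff.mp h6
    set d : ℝ := A nh nh nh with hddef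
    have hd : d = -(α * sb) := by
      have hexp2 : A x1 x1 nh = C ^ 2 * (α * sb) + 2 * C * S * (-(α * c)) + S ^ 2 * d := by
        rw [hx1def]
        simp only [map_add, map_smul, LinearMap.add_apply, LinearMap.smul_apply, smul_eq_mul]
        have p4 : A nh u nh = A u nh nh := hA1 nh u nh
        rw [p4, hb', he', ← hddef]
        ring
      have h0 : C ^ 2 * (α * sb) + 2 * C * S * (-(α * c)) + S ^ 2 * d = 0 := by
        rw [← hexp2]; exact hR0
      have h1 : (1 - c) * (α * sb + d) = 0 := by
        linear_combination 2 * h0 - 2 * α * sb * hC2 - 2 * d * hS2 + 2 * α * c * hCS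
      have hclt : c < 1 := by nlinarith [hc2lt]
      rcases mul_eq_zero.mp h1 with h | h
      · exfalso; linarith
      · linarith
    have hcs1 : c ^ 2 + sb ^ 2 = 1 := by linarith [hsb2]
    obtain ⟨C', S', h1', h2', h3'⟩ := cube_root_circle c sb hcs1
    set z2 : E := C' • u + S' • nh with hz2def
    have hz2 : β z2 z2 = 1 := by
      rw [hz2def, hcomb]; exact h1'
    have hAz2 : A z2 z2 z2 = α := by
      rw [hz2def]
      simp only [map_add, map_smul, LinearMap.add_apply, LinearMap.smul_apply, smul_eq_mul]
      have p1 : A u nh u = A u u nh := hA2 u nh u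
      have p2 : A nh u u = A u u nh := (hA1 nh u u).trans (hA2 u nh u)
      have p3 : A nh nh u = A u nh nh := (hA2 nh nh u).trans (hA1 nh u nh)
      have p4 : A nh u nh = A u nh nh := hA1 nh u nh
      rw [p1, p2, p3, p4, ha', hb', he', ← hddef, hd]
      linear_combination (α * c) * h2' + (α * sb) * h3' + α * hcs1
    have hfin := hA z2
    rw [hz2, Real.sqrt_one, one_pow, hAz2] at hfin
    linarith [le_abs_self α, hfin]

theorem trilinear_form_bound {p : ℕ}
    (A : EuclideanSpace ℝ (Fin p) →ₗ[ℝ] EuclideanSpace ℝ (Fin p) →ₗ[ℝ]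
          EuclideanSpace ℝ (Fin p) →ₗ[ℝ] ℝ)
    (B : EuclideanSpace ℝ (Fin p) →ₗ[ℝ] EuclideanSpace ℝ (Fin p) →ₗ[ℝ] ℝ)
    (hAsymm₁ : ∀ u v w, A u v w = A v u w)
    (hAsymm₂ : ∀ u v w, A u v w = A u w v)
    (hBsymm : ∀ u v, B u v = B v u)
    (hBpsd : ∀ u, 0 ≤ B u u)
    (hAB : ∀ u, |A u u u| ≤ (B u u) ^ ((3 : ℝ) / 2)) :
    ∀ u v w, |A u v w| ≤ Real.sqrt (B u u) * Real.sqrt (B v v) * Real.sqrt (B w w) := by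
  intro u v w
  have main : ∀ ε : ℝ, 0 < ε → |A u v w| ≤
      Real.sqrt (B u u + ε * ‖u‖ ^ 2) * Real.sqrt (B v v + ε * ‖v‖ ^ 2) *
        Real.sqrt (B w w + ε * ‖w‖ ^ 2) := by
    intro ε hε
    set β : EuclideanSpace ℝ (Fin p) →ₗ[ℝ] EuclideanSpace ℝ (Fin p) →ₗ[ℝ] ℝ :=
      LinearMap.mk₂ ℝ (fun x y => B x y + ε * inner ℝ x y)
        (by intro x y z; simp only [map_add, LinearMap.add_apply, inner_add_left]; ring)
        (by intro t x y; simp only [map_smul, LinearMap.smul_apply, smul_eq_mul,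
              real_inner_smul_left]; ring)
        (by intro x y z; simp only [map_add, inner_add_right]; ring)
        (by intro t x y; simp only [map_smul, smul_eq_mul, real_inner_smul_right]; ring)
      with hβdef
    have hβapp : ∀ x y : EuclideanSpace ℝ (Fin p), β x y = B x y + ε * inner ℝ x y := by
      intro x y; rw [hβdef]; rfl
    have hβdiag : ∀ x : EuclideanSpace ℝ (Fin p), β x x = B x x + ε * ‖x‖ ^ 2 := by
      intro x; rw [hβapp, real_inner_self_eq_norm_sq]
    have hβs : ∀ x y, β x y = β y x := by
      intro x y; rw [hβapp, hβapp, hBsymm, real_inner_comm]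
    have hco : ∀ x : EuclideanSpace ℝ (Fin p), ε * ‖x‖ ^ 2 ≤ β x x := by
      intro x; rw [hβdiag]; linarith [hBpsd x]
    have hA3 : ∀ x : EuclideanSpace ℝ (Fin p), |A x x x| ≤ Real.sqrt (β x x) ^ 3 := by
      intro x
      have h0 : 0 ≤ B x x := hBpsd x
      have h2 : (B x x) ^ ((3 : ℝ) / 2) = Real.sqrt (B x x) ^ 3 := by
        rw [Real.sqrt_eq_rpow, ← Real.rpow_natCast ((B x x) ^ ((1:ℝ)/2)) 3,
          ← Real.rpow_mul h0]
        norm_num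
      have h3 : Real.sqrt (B x x) ≤ Real.sqrt (β x x) := by
        apply Real.sqrt_le_sqrt
        rw [hβdiag]
        nlinarith [norm_nonneg x]
      calc |A x x x| ≤ (B x x) ^ ((3:ℝ)/2) := hAB x
        _ = Real.sqrt (B x x) ^ 3 := h2
        _ ≤ Real.sqrt (β x x) ^ 3 := by
            apply pow_le_pow_left₀ (Real.sqrt_nonneg _) h3
    have hk := key_lemma A β hAsymm₁ hAsymm₂ hβs ε hε hco hA3 u v w
    rw [hβdiag, hβdiag, hβdiag] at hk
    exact hk
  have hcont : Continuous fun ε : ℝ =>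
      Real.sqrt (B u u + ε * ‖u‖ ^ 2) * Real.sqrt (B v v + ε * ‖v‖ ^ 2) *
        Real.sqrt (B w w + ε * ‖w‖ ^ 2) := by
    have h1 : ∀ a b : ℝ, Continuous fun ε : ℝ => Real.sqrt (a + ε * b) := by
      intro a b
      exact Real.continuous_sqrt.comp (continuous_const.add (continuous_id.mul continuous_const))
    exact ((h1 _ _).mul (h1 _ _)).mul (h1 _ _)
  have htend : Filter.Tendsto (fun ε : ℝ =>
      Real.sqrt (B u u + ε * ‖u‖ ^ 2) * Real.sqrt (B v v + ε * ‖v‖ ^ 2) *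
        Real.sqrt (B w w + ε * ‖w‖ ^ 2)) (nhdsWithin 0 (Set.Ioi 0))
      (nhds (Real.sqrt (B u u) * Real.sqrt (B v v) * Real.sqrt (B w w))) := by
    have h2 := hcont.tendsto 0
    simp only [zero_mul, add_zero] at h2
    exact h2.mono_left nhdsWithin_le_nhds
  refine ge_of_tendsto htend ?_
  filter_upwards [self_mem_nhdsWithin] with ε hε
  exact main ε hε
end

section
/- Let L : ℝ^p → ℝ be convex and differentiable, S ⊆ {1,…,p}, and suppose β̌ minimizes L(β) + τ‖β‖₁ over {β : β_{S^c} = 0}, so that [∇L(β̌)]_S + τ ž_S = 0 for some ž_S with ‖ž_S‖_∞ ≤ 1. If additionally ‖[∇L(β̌)]_{S^c}‖_∞ < τ, then β̌ is a global minimizer of L(β) + τ‖β‖₁ over all of ℝ^p. -/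
theorem primal_dual_witness_global_min {p : ℕ}
    (L : EuclideanSpace ℝ (Fin p) → ℝ)
    (hconv : ConvexOn ℝ Set.univ L)
    (hdiff : Differentiable ℝ L)
    (S : Set (Fin p)) (τ : ℝ) (hτ : 0 < τ)
    (βcheck : EuclideanSpace ℝ (Fin p))
    (hsupp : ∀ i ∉ S, βcheck i = 0)
    (hmin : ∀ β : EuclideanSpace ℝ (Fin p), (∀ i ∉ S, β i = 0) →
        L βcheck + τ * ∑ i, |βcheck i| ≤ L β + τ * ∑ i, |β i|)
    (zcheck : Fin p → ℝ)
    (hstat : ∀ i ∈ S,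
        fderiv ℝ L βcheck (EuclideanSpace.single i 1) + τ * zcheck i = 0)
    (hzbound : ∀ i ∈ S, |zcheck i| ≤ 1)
    (hdual : ∀ i ∉ S, |fderiv ℝ L βcheck (EuclideanSpace.single i 1)| < τ) :
    ∀ β : EuclideanSpace ℝ (Fin p),
        L βcheck + τ * ∑ i, |βcheck i| ≤ L β + τ * ∑ i, |β i| := by
  classical
  set g : Fin p → ℝ := fun i => fderiv ℝ L βcheck (EuclideanSpace.single i 1) with hg
  -- directional derivative along a vector
  have hderiv : ∀ (v : EuclideanSpace ℝ (Fin p)) (t : ℝ),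
      HasDerivAt (fun t : ℝ => L (βcheck + t • v)) (fderiv ℝ L (βcheck + t • v) v) t := by
    intro v t
    have hc : HasDerivAt (fun t : ℝ => βcheck + t • v) v t := by
      simpa using ((hasDerivAt_id t).smul_const v).const_add βcheck
    exact ((hdiff _).hasFDerivAt).comp_hasDerivAt t hc
  have hderiv0 : ∀ (v : EuclideanSpace ℝ (Fin p)),
      HasDerivAt (fun t : ℝ => L (βcheck + t • v)) (fderiv ℝ L βcheck v) 0 := by
    intro v
    have := hderiv v 0
    simpa using this
  -- gradient inequality
  have grad_ineq : ∀ β : EuclideanSpace ℝ (Fin p),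
      L βcheck + fderiv ℝ L βcheck (β - βcheck) ≤ L β := by
    intro β
    set v := β - βcheck with hv
    have hφconv : ConvexOn ℝ Set.univ (fun t : ℝ => L (βcheck + t • v)) := by
      have h := hconv.comp_affineMap (AffineMap.lineMap βcheck (βcheck + v))
      have he : (fun t : ℝ => L (βcheck + t • v))
          = (L ∘ ⇑(AffineMap.lineMap βcheck (βcheck + v))) := by
        funext t
        simp [AffineMap.lineMap_apply, add_comm]
      rw [he]
      simpa using h
    have hs := hφconv.le_slope_of_hasDerivAt (Set.mem_univ (0:ℝ)) (Set.mem_univ (1:ℝ))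
      one_pos (hderiv0 v)
    have h0 : (fun t : ℝ => L (βcheck + t • v)) 0 = L βcheck := by simp
    have h1 : (fun t : ℝ => L (βcheck + t • v)) 1 = L β := by
      simp [hv]
    rw [slope_def_field] at hs
    simp only [h0, h1] at hs
    have : fderiv ℝ L βcheck v ≤ L β - L βcheck := by
      have := hs
      field_simp at this
      linarith
    linarith
  -- linearity: fderiv applied to v is sum of coordinates times g
  have hlin : ∀ v : EuclideanSpace ℝ (Fin p),
      fderiv ℝ L βcheck v = ∑ i, v i * g i := by
    intro v
    have hv : v = ∑ i, v i • EuclideanSpace.single i (1:ℝ) := by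
      ext j
      have : (∑ i, v i • EuclideanSpace.single i (1:ℝ)) j
          = ∑ i, (v i • EuclideanSpace.single i (1:ℝ)) j :=
        by rw [WithLp.ofLp_sum]; exact Finset.sum_apply j Finset.univ _
      rw [this]
      simp [EuclideanSpace.single_apply]
    conv_lhs => rw [hv]
    rw [map_sum]
    simp [smul_eq_mul, hg]
  -- sign condition on S
  have hsign : ∀ i ∈ S, zcheck i * βcheck i = |βcheck i| := by
    intro i hiS
    by_cases h0 : βcheck i = 0
    · simp [h0]
    · -- local min of ψ
      set e : EuclideanSpace ℝ (Fin p) := EuclideanSpace.single i (1:ℝ) with he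
      have hcoord : ∀ (t : ℝ) (j : Fin p), (βcheck + t • e) j
          = βcheck j + (if j = i then t else 0) := by
        intro t j
        have : (βcheck + t • e) j = βcheck j + t * e j := rfl
        rw [this, he]
        by_cases hji : j = i <;> simp [EuclideanSpace.single_apply, hji]
      have hψmin : ∀ t : ℝ,
          L βcheck + τ * |βcheck i| ≤ L (βcheck + t • e) + τ * |βcheck i + t| := by
        intro t
        have hsupp' : ∀ j ∉ S, (βcheck + t • e) j = 0 := by
          intro j hj
          rw [hcoord]
          have hji : j ≠ i := fun h => hj (h ▸ hiS)
          simp [hji, hsupp j hj]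
        have h := hmin (βcheck + t • e) hsupp'
        have hsum : ∑ j, |(βcheck + t • e) j|
            = (∑ j, |βcheck j|) - |βcheck i| + |βcheck i + t| := by
          have h1 : ∑ j, |(βcheck + t • e) j|
              = ∑ j, (if j = i then |βcheck i + t| else |βcheck j|) := by
            apply Finset.sum_congr rfl
            intro j _
            rw [hcoord]
            by_cases hji : j = i
            · subst hji; simp
            · simp [hji]
          have h2 : (∑ j, |βcheck j|)
              = |βcheck i| + ∑ j ∈ Finset.univ.erase i, |βcheck j| :=
            (Finset.add_sum_erase _ _ (Finset.mem_univ i)).symm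
          have h3 : ∑ j, (if j = i then |βcheck i + t| else |βcheck j|)
              = |βcheck i + t| + ∑ j ∈ Finset.univ.erase i, |βcheck j| := by
            rw [← Finset.add_sum_erase _ _ (Finset.mem_univ i)]
            simp only [if_pos rfl]
            congr 1
            apply Finset.sum_congr rfl
            intro j hj
            simp [Finset.ne_of_mem_erase hj]
          rw [h1, h3, h2]
          ring
        rw [hsum] at h
        nlinarith [h]
      have hloc : IsLocalMin (fun t : ℝ => L (βcheck + t • e) + τ * |βcheck i + t|) 0 := by
        apply Filter.Eventually.of_forall
        intro t
        simpa using hψmin t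
      have hd1 : HasDerivAt (fun t : ℝ => L (βcheck + t • e)) (g i) 0 := hderiv0 e
      have hd2 : HasDerivAt (fun t : ℝ => |βcheck i + t|) ((SignType.sign (βcheck i) : ℝ)) 0 := by
        have habs : HasDerivAt (|·|) ((SignType.sign (βcheck i) : ℝ)) (βcheck i) :=
          hasDerivAt_abs h0
        have hshift : HasDerivAt (fun t : ℝ => βcheck i + t) 1 0 :=
          HasDerivAt.const_add (βcheck i) (hasDerivAt_id 0)
        have habs' : HasDerivAt (|·|) ((SignType.sign (βcheck i) : ℝ)) ((fun t : ℝ => βcheck i + t) 0) := by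
          simpa using habs
        have := habs'.comp 0 hshift
        rw [mul_one] at this
        exact this
      have hdψ : HasDerivAt (fun t : ℝ => L (βcheck + t • e) + τ * |βcheck i + t|)
          (g i + τ * (SignType.sign (βcheck i) : ℝ)) 0 := hd1.add (hd2.const_mul τ)
      have hzero := hloc.hasDerivAt_eq_zero hdψ
      have hstat' := hstat i hiS
      have hzero' : fderiv ℝ L βcheck (EuclideanSpace.single i 1)
          + τ * (SignType.sign (βcheck i) : ℝ) = 0 := hzero
      have hz : zcheck i = (SignType.sign (βcheck i) : ℝ) := by
        have h : τ * zcheck i = τ * (SignType.sign (βcheck i) : ℝ) := by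
          linarith [hstat', hzero']
        exact mul_left_cancel₀ (ne_of_gt hτ) h
      rw [hz]
      rcases lt_or_gt_of_ne h0 with hlt | hgt
      · simp [hlt, abs_of_neg hlt]
      · simp [hgt, abs_of_pos hgt]
  -- main inequality
  intro β
  have hgi := grad_ineq β
  rw [hlin] at hgi
  have hsub : ∀ i, (β - βcheck) i = β i - βcheck i := fun i => rfl
  have key : 0 ≤ ∑ i, ((β i - βcheck i) * g i + τ * |β i| - τ * |βcheck i|) := by
    apply Finset.sum_nonneg
    intro i _
    by_cases hiS : i ∈ S
    · have hgi' : g i = -(τ * zcheck i) := by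
        show fderiv ℝ L βcheck (EuclideanSpace.single i 1) = -(τ * zcheck i)
        have := hstat i hiS
        linarith
      have hsgn := hsign i hiS
      have hzb := hzbound i hiS
      have h1 : zcheck i * β i ≤ |β i| := by
        calc zcheck i * β i ≤ |zcheck i * β i| := le_abs_self _
        _ = |zcheck i| * |β i| := abs_mul _ _
        _ ≤ 1 * |β i| := by
            apply mul_le_mul_of_nonneg_right hzb (abs_nonneg _)
        _ = |β i| := one_mul _
      rw [hgi']
      nlinarith [h1, hsgn]
    · have h0 : βcheck i = 0 := hsupp i hiS
      have hd : |g i| < τ := hdual i hiS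
      have : -(|g i| * |β i|) ≤ β i * g i := by
        calc -(|g i| * |β i|) = -|β i * g i| := by rw [abs_mul]; ring
        _ ≤ β i * g i := neg_abs_le _
      have hb : |g i| * |β i| ≤ τ * |β i| :=
        mul_le_mul_of_nonneg_right (le_of_lt hd) (abs_nonneg _)
      rw [h0]
      simp only [abs_zero, mul_zero, sub_zero]
      linarith
  have hsum_split : ∑ i, ((β i - βcheck i) * g i + τ * |β i| - τ * |βcheck i|)
      = (∑ i, (β - βcheck) i * g i) + τ * (∑ i, |β i|) - τ * (∑ i, |βcheck i|) := by
    simp only [hsub]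
    rw [Finset.sum_sub_distrib, Finset.sum_add_distrib, Finset.mul_sum, Finset.mul_sum]
  rw [hsum_split] at key
  linarith
end
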